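/- arXiv:2402.12478 — 5 statements merged into one kernel-verified Lean document; each statement's English description precedes it below -/
import Mathlib

section
/- Let A be a commutative ring, and consider the ring Q = A[e, d_{i,j} : i ≥ 1, j ≥ 0]/(d_{i,j} - c_{i,j} - e·d_{i,j+1}), where c_{i,j} ∈ A are fixed constants. Then e is a regular element (non-zerodivisor) of Q. -/
/-!
STATEMENT 0: Let `A` be a commutative ring and let
`Q = A[e, d_{i,j} : i ≥ 1, j ≥ 0] / (d_{i,j} - c_{i,j} - e·d_{i,j+1})`,
where `c_{i,j} ∈ A` are fixed constants.  Then `e` is a regular element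
(non-zerodivisor) of `Q`.

We index the variables `d_{i+1,j}` by `Sum.inr (i, j)` (so the index `i : ℕ`
corresponds to the subscript `i + 1 ≥ 1`) and the variable `e` by `Sum.inl ()`.
-/

open MvPolynomial

/-- The ideal of relations `d_{i,j} - c_{i,j} - e·d_{i,j+1}`. -/
noncomputable def qRel (A : Type*) [CommRing A] (c : ℕ → ℕ → A) :
    Ideal (MvPolynomial (Unit ⊕ ℕ × ℕ) A) :=
  Ideal.span { p | ∃ i j : ℕ,
    p = X (Sum.inr (i, j)) - C (c i j) - X (Sum.inl ()) * X (Sum.inr (i, j + 1)) }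


/-- Multiplication by a variable is injective in a multivariate polynomial ring. -/
lemma X_mul_eq_zero_aux {σ : Type*} {R : Type*} [CommRing R] (s : σ)
    (p : MvPolynomial σ R) (h : X s * p = 0) : p = 0 := by
  ext m
  have := congrArg (coeff (Finsupp.single s 1 + m)) h
  rwa [coeff_X_mul, coeff_zero] at this

section

variable {A : Type*} [CommRing A]

/-- `d_{i,j}` rewritten in terms of `e` and `d_{i,k}` (for `j ≤ k`). -/
noncomputable def gg (c : ℕ → ℕ → A) (i j k : ℕ) : MvPolynomial (Unit ⊕ ℕ × ℕ) A :=
  (∑ m ∈ Finset.range (k - j), C (c i (j + m)) * X (Sum.inl ()) ^ m)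
    + X (Sum.inl ()) ^ (k - j) * X (Sum.inr (i, k))

lemma gg_self (c : ℕ → ℕ → A) (i k : ℕ) : gg c i k k = X (Sum.inr (i, k)) := by
  simp [gg]

lemma gg_step (c : ℕ → ℕ → A) {i j k : ℕ} (h : j < k) :
    gg c i j k = C (c i j) + X (Sum.inl ()) * gg c i (j + 1) k := by
  have hk : k - j = (k - (j + 1)) + 1 := by omega
  rw [gg, gg, hk, Finset.sum_range_succ', mul_add, Finset.mul_sum]
  simp only [pow_zero, mul_one, add_zero]
  have hsum : ∀ m ∈ Finset.range (k - (j + 1)),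
      C (c i (j + (m + 1))) * X (Sum.inl ()) ^ (m + 1)
        = (X (Sum.inl ()) * (C (c i (j + 1 + m)) * X (Sum.inl ()) ^ m)
            : MvPolynomial (Unit ⊕ ℕ × ℕ) A) := by
    intro m _
    have : j + (m + 1) = j + 1 + m := by omega
    rw [this]
    ring
  rw [Finset.sum_congr rfl hsum]
  ring

/-- The rewriting substitution sending each `d_{i,j}` with `j ≤ k` to `gg c i j k`. -/
noncomputable def sig (c : ℕ → ℕ → A) (k : ℕ) :
    MvPolynomial (Unit ⊕ ℕ × ℕ) A →+* MvPolynomial (Unit ⊕ ℕ × ℕ) A :=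
  (aeval (fun v : Unit ⊕ ℕ × ℕ => match v with
    | Sum.inl _ => X (Sum.inl ())
    | Sum.inr (i, j) => if j ≤ k then gg c i j k else X (Sum.inr (i, j)))).toRingHom

lemma sig_e (c : ℕ → ℕ → A) (k : ℕ) :
    sig c k (X (Sum.inl ())) = X (Sum.inl ()) := by
  simp [sig]

lemma sig_C (c : ℕ → ℕ → A) (k : ℕ) (a : A) : sig c k (C a) = C a := by
  simp [sig, algebraMap_eq]

lemma sig_d (c : ℕ → ℕ → A) {k i j : ℕ} (h : j ≤ k) :
    sig c k (X (Sum.inr (i, j))) = gg c i j k := by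
  simp [sig, h]

/-- `sig` kills the relation with index `(i, j)` once `j < k`. -/
lemma sig_rel (c : ℕ → ℕ → A) {k i j : ℕ} (h : j + 1 ≤ k) :
    sig c k (X (Sum.inr (i, j)) - C (c i j)
      - X (Sum.inl ()) * X (Sum.inr (i, j + 1))) = 0 := by
  rw [map_sub, map_sub, map_mul, sig_C, sig_e, sig_d c (le_of_lt h), sig_d c h,
    gg_step c h]
  ring

/-- Modulo the relations, `gg c i j k` equals `d_{i,j}`. -/
lemma mk_gg (c : ℕ → ℕ → A) (i : ℕ) :
    ∀ t k j, j + t = k → Ideal.Quotient.mk (qRel A c) (gg c i j k)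
      = Ideal.Quotient.mk (qRel A c) (X (Sum.inr (i, j))) := by
  intro t
  induction t with
  | zero =>
    intro k j h
    obtain rfl : j = k := by omega
    rw [gg_self]
  | succ t ih =>
    intro k j h
    have hj : j < k := by omega
    rw [gg_step c hj, map_add, map_mul, ih k (j + 1) (by omega)]
    have hrel : X (Sum.inr (i, j)) - C (c i j)
        - X (Sum.inl ()) * X (Sum.inr (i, j + 1)) ∈ qRel A c :=
      Ideal.subset_span ⟨i, j, rfl⟩
    rw [← map_mul, ← map_add, Ideal.Quotient.eq]
    convert (qRel A c).neg_mem hrel using 1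
    ring

/-- `sig c k` is the identity modulo the relations. -/
lemma mk_sig (c : ℕ → ℕ → A) (k : ℕ) (f : MvPolynomial (Unit ⊕ ℕ × ℕ) A) :
    Ideal.Quotient.mk (qRel A c) (sig c k f) = Ideal.Quotient.mk (qRel A c) f := by
  have : (Ideal.Quotient.mk (qRel A c)).comp (sig c k)
      = (Ideal.Quotient.mk (qRel A c) : MvPolynomial (Unit ⊕ ℕ × ℕ) A →+* _) := by
    apply MvPolynomial.ringHom_ext
    · intro a
      simp [sig_C]
    · rintro (⟨⟩ | ⟨i, j⟩)
      · simp [sig]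
      · by_cases hj : j ≤ k
        · rw [RingHom.comp_apply, sig_d c hj, mk_gg c i (k - j) k j (by omega)]
        · have : sig c k (X (Sum.inr (i, j))) = X (Sum.inr (i, j)) := by
            simp [sig, hj]
          rw [RingHom.comp_apply, this]
  exact congrFun (congrArg (fun g => g.toFun) this) f

/-- Every element of the relation ideal is killed by `sig c k` for all large `k`. -/
lemma sig_vanish (c : ℕ → ℕ → A) {f : MvPolynomial (Unit ⊕ ℕ × ℕ) A}
    (hf : f ∈ qRel A c) : ∃ N, ∀ k, N ≤ k → sig c k f = 0 := by
  refine Submodule.span_induction ?_ ?_ ?_ ?_ hf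
  · rintro p ⟨i, j, rfl⟩
    exact ⟨j + 1, fun k hk => sig_rel c hk⟩
  · exact ⟨0, fun k _ => map_zero _⟩
  · rintro x y _ _ ⟨N1, h1⟩ ⟨N2, h2⟩
    exact ⟨max N1 N2, fun k hk => by
      rw [map_add, h1 k (le_trans (le_max_left _ _) hk),
        h2 k (le_trans (le_max_right _ _) hk), add_zero]⟩
  · rintro a x _ ⟨N, h⟩
    exact ⟨N, fun k hk => by
      rw [smul_eq_mul, map_mul, h k hk, mul_zero]⟩

end

theorem e_regular_in_Q (A : Type*) [CommRing A] (c : ℕ → ℕ → A) :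
    (Ideal.Quotient.mk (qRel A c) (X (Sum.inl ())) :
        MvPolynomial (Unit ⊕ ℕ × ℕ) A ⧸ qRel A c) ∈
      nonZeroDivisors (MvPolynomial (Unit ⊕ ℕ × ℕ) A ⧸ qRel A c) := by
  rw [mem_nonZeroDivisors_iff_right]
  intro x hx
  obtain ⟨f, rfl⟩ := Ideal.Quotient.mk_surjective x
  rw [← map_mul, Ideal.Quotient.eq_zero_iff_mem] at hx
  obtain ⟨N, hN⟩ := sig_vanish c hx
  have h0 : X (Sum.inl ()) * sig c N f = 0 := by
    have := hN N le_rfl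
    rw [map_mul, sig_e] at this
    rwa [mul_comm] at this
  have hsf : sig c N f = 0 := X_mul_eq_zero_aux _ _ h0
  have := mk_sig c N f
  rw [hsf, map_zero] at this
  exact this.symm
end

section
/- Let A be a commutative ring and c_{i,j} ∈ A fixed constants for i ≥ 1, j ≥ 0. Let Q = A[e, d_{i,j}]/(d_{i,j} - c_{i,j} - e·d_{i,j+1}). Then the natural map Q → A[[e]] sending d_{i,j} to the power series Σ_{ℓ≥0} c_{i,j+ℓ} e^ℓ becomes an isomorphism after e-adic completion of Q. -/
open MvPolynomial

set_option maxHeartbeats 4000000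
set_option synthInstance.maxHeartbeats 1000000

namespace CompletionIsoAux

variable {A : Type*} [CommRing A] (c : ℕ → ℕ → A)

local notation "Q" => MvPolynomial (Unit ⊕ ℕ × ℕ) A ⧸ qRel A c

/-- quotient map -/
noncomputable def mq : MvPolynomial (Unit ⊕ ℕ × ℕ) A →+* Q :=
  Ideal.Quotient.mk (qRel A c)

/-- the image of `e` -/
noncomputable def eQ : Q := mq c (X (Sum.inl ()))

/-- image of constants -/
noncomputable def cQ (a : A) : Q := mq c (C a)

/-- image of the `d` variables -/
noncomputable def dQ (i j : ℕ) : Q := mq c (X (Sum.inr (i, j)))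

/-- the ideal `(e)` -/
noncomputable def Ie : Ideal Q := Ideal.span {eQ c}

lemma rel (i j : ℕ) :
    mq c (X (Sum.inr (i, j))) = mq c (C (c i j)) + eQ c * mq c (X (Sum.inr (i, j + 1))) := by
  rw [eQ, mq, ← map_mul, ← map_add, Ideal.Quotient.eq]
  refine Ideal.subset_span ?_
  exact ⟨i, j, by ring⟩

/-- polynomials in `e` inside `Q` -/
noncomputable def pQ : Polynomial A →+* Q :=
  Polynomial.eval₂RingHom ((mq c).comp (MvPolynomial.C : A →+* MvPolynomial (Unit ⊕ ℕ × ℕ) A))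
    (eQ c)

lemma pQ_C (a : A) : pQ c (Polynomial.C a) = mq c (C a) := by
  simp [pQ]

lemma pQ_X : pQ c (Polynomial.X) = eQ c := by
  simp [pQ]

section phi

lemma phi_pQ (φ : Q →+* PowerSeries A) (p : Polynomial A) (hC : ∀ a : A, φ (cQ c a) = PowerSeries.C a)
    (he : φ (eQ c) = (PowerSeries.X : PowerSeries A)) :
    φ (pQ c p) = (p : PowerSeries A) := by
  have : (φ.comp (pQ c)) = Polynomial.coeToPowerSeries.ringHom := by
    apply Polynomial.ringHom_ext
    · intro a
      simpa [pQ_C, cQ] using hC a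
    · rw [RingHom.comp_apply, pQ_X]
      simpa using he
  have h2 := congrFun (congrArg (fun f => f.toFun) this) p
  simpa [Polynomial.coeToPowerSeries.ringHom_apply] using h2

/-- decomposition property -/
def Decomp (n : ℕ) (q : Q) : Prop := ∃ p : Polynomial A, ∃ r : Q, q = pQ c p + eQ c ^ n * r

lemma decomp_add {n : ℕ} {q₁ q₂ : Q} (h₁ : Decomp c n q₁) (h₂ : Decomp c n q₂) :
    Decomp c n (q₁ + q₂) := by
  obtain ⟨p₁, r₁, rfl⟩ := h₁
  obtain ⟨p₂, r₂, rfl⟩ := h₂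
  exact ⟨p₁ + p₂, r₁ + r₂, by rw [map_add]; ring⟩

lemma decomp_mul {n : ℕ} {q₁ q₂ : Q} (h₁ : Decomp c n q₁) (h₂ : Decomp c n q₂) :
    Decomp c n (q₁ * q₂) := by
  obtain ⟨p₁, r₁, rfl⟩ := h₁
  obtain ⟨p₂, r₂, rfl⟩ := h₂
  exact ⟨p₁ * p₂, pQ c p₁ * r₂ + r₁ * pQ c p₂ + eQ c ^ n * (r₁ * r₂), by rw [map_mul]; ring⟩

lemma rel' (i j : ℕ) : dQ c i j = cQ c (c i j) + eQ c * dQ c i (j + 1) := rel c i j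

lemma pQ_C_mul_X_pow (a : A) (n : ℕ) :
    pQ c (Polynomial.C a * Polynomial.X ^ n) = cQ c a * eQ c ^ n := by
  rw [map_mul, map_pow, pQ_C, pQ_X, cQ]

lemma decomp_d_strong (n i j : ℕ) :
    ∃ p : Polynomial A, dQ c i j = pQ c p + eQ c ^ n * dQ c i (j + n) := by
  induction n with
  | zero => exact ⟨0, by simp⟩
  | succ n ih =>
      obtain ⟨p, hp⟩ := ih
      refine ⟨p + Polynomial.C (c i (j + n)) * Polynomial.X ^ n, ?_⟩
      rw [map_add, pQ_C_mul_X_pow, hp, rel' c i (j + n)]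
      have : j + n + 1 = j + (n + 1) := by omega
      rw [this]
      ring

lemma decomp_d (n i j : ℕ) : Decomp c n (mq c (X (Sum.inr (i, j)))) := by
  obtain ⟨p, hp⟩ := decomp_d_strong c n i j
  exact ⟨p, dQ c i (j + n), hp⟩

lemma decomp_all (n : ℕ) (q : Q) : Decomp c n q := by
  obtain ⟨m, rfl⟩ := Ideal.Quotient.mk_surjective q
  induction m using MvPolynomial.induction_on with
  | C a => exact ⟨Polynomial.C a, 0, by rw [pQ_C]; simp [mq]⟩
  | add p₁ p₂ h₁ h₂ => rw [map_add]; exact decomp_add c h₁ h₂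
  | mul_X p s h =>
      rw [map_mul]
      refine decomp_mul c h ?_
      rcases s with u | ⟨i, j⟩
      · exact ⟨Polynomial.X, 0, by rw [pQ_X]; simp [eQ, mq]⟩
      · exact decomp_d c n i j

lemma pQ_mem_pow {p : Polynomial A} {n : ℕ} (h : ∀ k < n, p.coeff k = 0) :
    pQ c p ∈ Ie c ^ n := by
  obtain ⟨p', rfl⟩ := Polynomial.X_pow_dvd_iff.2 h
  rw [map_mul, map_pow, pQ_X, Ie, Ideal.span_singleton_pow]
  exact Ideal.mem_span_singleton.2 ⟨pQ c p', by ring⟩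

lemma mem_pow_of_coeff (φ : Q →+* PowerSeries A) (hC : ∀ a : A, φ (cQ c a) = PowerSeries.C a)
    (he : φ (eQ c) = (PowerSeries.X : PowerSeries A)) {q : Q} {n : ℕ}
    (h : ∀ k < n, PowerSeries.coeff k (φ q) = 0) : q ∈ Ie c ^ n := by
  obtain ⟨p, r, rfl⟩ := decomp_all c n q
  have hc : ∀ k < n, p.coeff k = 0 := by
    intro k hk
    have hcoef := h k hk
    rw [map_add, map_mul, map_pow] at hcoef
    rw [phi_pQ c φ p hC he, he, map_add, mul_comm, PowerSeries.coeff_mul_X_pow',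
      if_neg (by omega), add_zero] at hcoef
    simpa [Polynomial.coeff_coe] using hcoef
  have h1 : pQ c p ∈ Ie c ^ n := pQ_mem_pow c hc
  have h2 : eQ c ^ n * r ∈ Ie c ^ n := by
    rw [Ie, Ideal.span_singleton_pow]
    exact Ideal.mem_span_singleton.2 ⟨r, rfl⟩
  exact Ideal.add_mem _ h1 h2

lemma coeff_zero_of_mem_pow (φ : Q →+* PowerSeries A) (he : φ (eQ c) = (PowerSeries.X : PowerSeries A)) {q : Q} {n : ℕ}
    (hq : q ∈ Ie c ^ n) :
    ∀ k < n, PowerSeries.coeff k (φ q) = 0 := by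
  intro k hk
  rw [Ie, Ideal.span_singleton_pow, Ideal.mem_span_singleton] at hq
  obtain ⟨r, rfl⟩ := hq
  rw [map_mul, map_pow, he, mul_comm, PowerSeries.coeff_mul_X_pow', if_neg (by omega)]

lemma smul_top (n : ℕ) : ((Ie c) ^ n • ⊤ : Submodule Q Q) = ((Ie c) ^ n : Ideal Q) := by
  rw [smul_eq_mul, Ideal.mul_top]

/-- extract coefficient `n` from level `n+1` -/
noncomputable def coeffAux (φ : Q →+* PowerSeries A) (he : φ (eQ c) = (PowerSeries.X : PowerSeries A)) (n : ℕ)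
    (y : Q ⧸ ((Ie c) ^ (n + 1) • ⊤ : Submodule Q Q)) : A :=
  Quotient.liftOn' y (fun q => PowerSeries.coeff n (φ q)) (by
    intro a b hab
    have h : a - b ∈ ((Ie c) ^ (n + 1) • ⊤ : Submodule Q Q) :=
      (Submodule.quotientRel_def _).mp hab
    rw [smul_top] at h
    have h0 := coeff_zero_of_mem_pow c φ he h n (by omega)
    rw [map_sub, map_sub, sub_eq_zero] at h0
    exact h0 )

lemma coeffAux_mk (φ : Q →+* PowerSeries A) (he : φ (eQ c) = (PowerSeries.X : PowerSeries A)) (n : ℕ) (q : Q) :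
    coeffAux c φ he n (Submodule.Quotient.mk q) = PowerSeries.coeff n (φ q) := rfl

end phi

end CompletionIsoAux

lemma AdicCompletion.transitionMap_mk {R M : Type*} [CommRing R] [AddCommGroup M] [Module R M]
    (I : Ideal R) {m n : ℕ} (hmn : m ≤ n) (x : M) :
    AdicCompletion.transitionMap I M hmn (Submodule.Quotient.mk x) = Submodule.Quotient.mk x := rfl

theorem completion_iso_powerSeries (A : Type*) [CommRing A] (c : ℕ → ℕ → A)
    (φ : (MvPolynomial (Unit ⊕ ℕ × ℕ) A ⧸ qRel A c) →+* PowerSeries A)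
    (hC : ∀ a : A, φ (Ideal.Quotient.mk (qRel A c) (C a)) = PowerSeries.C a)
    (he : φ (Ideal.Quotient.mk (qRel A c) (X (Sum.inl ()))) = PowerSeries.X)
    (hd : ∀ i j : ℕ, φ (Ideal.Quotient.mk (qRel A c) (X (Sum.inr (i, j)))) =
        PowerSeries.mk fun ℓ => c i (j + ℓ)) :
    ∃ g : AdicCompletion
        (Ideal.span {Ideal.Quotient.mk (qRel A c) (X (Sum.inl ()))})
        (MvPolynomial (Unit ⊕ ℕ × ℕ) A ⧸ qRel A c) ≃+* PowerSeries A,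
      ∀ q : MvPolynomial (Unit ⊕ ℕ × ℕ) A ⧸ qRel A c,
        g (AdicCompletion.of
            (Ideal.span {Ideal.Quotient.mk (qRel A c) (X (Sum.inl ()))})
            (MvPolynomial (Unit ⊕ ℕ × ℕ) A ⧸ qRel A c) q) = φ q := by
  classical
  have hC' : ∀ a : A, φ (CompletionIsoAux.cQ c a) = PowerSeries.C a := hC
  have he' : φ (CompletionIsoAux.eQ c) = (PowerSeries.X : PowerSeries A) := he
  -- value of coeffAux at lower levels
  have hval : ∀ (x : AdicCompletion (CompletionIsoAux.Ie c) (MvPolynomial (Unit ⊕ ℕ × ℕ) A ⧸ qRel A c)) (n : ℕ) (q : (MvPolynomial (Unit ⊕ ℕ × ℕ) A ⧸ qRel A c)),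
      x.val n = Submodule.Quotient.mk q → ∀ k, k + 1 ≤ n →
      CompletionIsoAux.coeffAux c φ he' k (x.val (k + 1)) = PowerSeries.coeff k (φ q) := by
    intro x n q hq k hk
    have h2 := x.property hk
    rw [hq, AdicCompletion.transitionMap_mk] at h2
    rw [← h2, CompletionIsoAux.coeffAux_mk]
  have hmkmul : ∀ (n : ℕ) (q₁ q₂ : (MvPolynomial (Unit ⊕ ℕ × ℕ) A ⧸ qRel A c)),
      (Submodule.Quotient.mk q₁ : (MvPolynomial (Unit ⊕ ℕ × ℕ) A ⧸ qRel A c) ⧸ ((CompletionIsoAux.Ie c) ^ n • ⊤ : Submodule (MvPolynomial (Unit ⊕ ℕ × ℕ) A ⧸ qRel A c) (MvPolynomial (Unit ⊕ ℕ × ℕ) A ⧸ qRel A c))) * Submodule.Quotient.mk q₂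
        = Submodule.Quotient.mk (q₁ * q₂) := fun _ _ _ => rfl
  -- the ring hom
  set G : AdicCompletion (CompletionIsoAux.Ie c) (MvPolynomial (Unit ⊕ ℕ × ℕ) A ⧸ qRel A c) →+* PowerSeries A :=
    { toFun := fun x => PowerSeries.mk fun n => CompletionIsoAux.coeffAux c φ he' n (x.val (n + 1))
      map_one' := by
        ext n
        rw [PowerSeries.coeff_mk]
        have h1 : (1 : AdicCompletion (CompletionIsoAux.Ie c) (MvPolynomial (Unit ⊕ ℕ × ℕ) A ⧸ qRel A c)).val (n + 1) = Submodule.Quotient.mk 1 :=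
          AdicCompletion.val_one (CompletionIsoAux.Ie c) (n + 1)
        rw [h1, CompletionIsoAux.coeffAux_mk, map_one]
      map_mul' := by
        intro x y
        ext n
        obtain ⟨q₁, hq₁⟩ := Submodule.Quotient.mk_surjective _ (x.val (n + 1))
        obtain ⟨q₂, hq₂⟩ := Submodule.Quotient.mk_surjective _ (y.val (n + 1))
        have hxy : (x * y).val (n + 1) = Submodule.Quotient.mk (q₁ * q₂) := by
          rw [AdicCompletion.val_mul, ← hq₁, ← hq₂, hmkmul]
        simp only [PowerSeries.coeff_mk, hxy, CompletionIsoAux.coeffAux_mk, map_mul,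
          PowerSeries.coeff_mul]
        apply Finset.sum_congr rfl
        intro ab hab
        rw [Finset.HasAntidiagonal.mem_antidiagonal] at hab
        rw [hval x (n + 1) q₁ hq₁.symm ab.1 (by omega), hval y (n + 1) q₂ hq₂.symm ab.2 (by omega)]
      map_zero' := by
        ext n
        have h0 : (0 : AdicCompletion (CompletionIsoAux.Ie c) (MvPolynomial (Unit ⊕ ℕ × ℕ) A ⧸ qRel A c)).val (n + 1) = Submodule.Quotient.mk 0 := by
          rw [AdicCompletion.val_zero]; rfl
        rw [PowerSeries.coeff_mk, h0, CompletionIsoAux.coeffAux_mk, map_zero, map_zero]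
      map_add' := by
        intro x y
        ext n
        obtain ⟨q₁, hq₁⟩ := Submodule.Quotient.mk_surjective _ (x.val (n + 1))
        obtain ⟨q₂, hq₂⟩ := Submodule.Quotient.mk_surjective _ (y.val (n + 1))
        have hxy : (x + y).val (n + 1) = Submodule.Quotient.mk (q₁ + q₂) := by
          rw [AdicCompletion.val_add_apply, ← hq₁, ← hq₂]; rfl
        simp only [map_add, PowerSeries.coeff_mk]
        rw [hxy, CompletionIsoAux.coeffAux_mk, ← hq₁, ← hq₂, CompletionIsoAux.coeffAux_mk,
          CompletionIsoAux.coeffAux_mk, map_add, map_add] } with hG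
  have hGval : ∀ (x : AdicCompletion (CompletionIsoAux.Ie c) (MvPolynomial (Unit ⊕ ℕ × ℕ) A ⧸ qRel A c)) (n : ℕ),
      PowerSeries.coeff n (G x) = CompletionIsoAux.coeffAux c φ he' n (x.val (n + 1)) := by
    intro x n
    show PowerSeries.coeff n
        (PowerSeries.mk fun m => CompletionIsoAux.coeffAux c φ he' m (x.val (m + 1))) = _
    rw [PowerSeries.coeff_mk]
  have hinj : Function.Injective G := by
    rw [injective_iff_map_eq_zero]
    intro x hx
    ext n
    obtain ⟨q, hq⟩ := Submodule.Quotient.mk_surjective _ (x.val n)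
    have hmem : q ∈ (CompletionIsoAux.Ie c) ^ n := by
      refine CompletionIsoAux.mem_pow_of_coeff c φ hC' he' ?_
      intro k hk
      rw [← hval x n q hq.symm k (by omega), ← hGval x k, hx, map_zero]
    rw [← hq, AdicCompletion.val_zero_apply]
    rw [Submodule.Quotient.mk_eq_zero, CompletionIsoAux.smul_top]
    exact hmem
  have hsurj : Function.Surjective G := by
    intro f
    have hprop : ∀ {m n : ℕ} (hmn : m ≤ n),
        AdicCompletion.transitionMap (CompletionIsoAux.Ie c) (MvPolynomial (Unit ⊕ ℕ × ℕ) A ⧸ qRel A c) hmn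
          (Submodule.Quotient.mk (CompletionIsoAux.pQ c (f.trunc n)))
          = Submodule.Quotient.mk (CompletionIsoAux.pQ c (f.trunc m)) := by
      intro m n hmn
      rw [AdicCompletion.transitionMap_mk, Submodule.Quotient.eq, CompletionIsoAux.smul_top,
        ← map_sub]
      refine CompletionIsoAux.pQ_mem_pow c ?_
      intro k hk
      rw [Polynomial.coeff_sub, PowerSeries.coeff_trunc, PowerSeries.coeff_trunc,
        if_pos (by omega), if_pos (by omega), sub_self]
    refine ⟨(⟨fun n => Submodule.Quotient.mk (CompletionIsoAux.pQ c (f.trunc n)),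
      fun {m n} hmn => hprop hmn⟩ : AdicCompletion (CompletionIsoAux.Ie c) _), ?_⟩
    ext n
    refine (hGval _ n).trans ?_
    rw [CompletionIsoAux.coeffAux_mk, CompletionIsoAux.phi_pQ c φ _ hC' he',
      Polynomial.coeff_coe, PowerSeries.coeff_trunc, if_pos (by omega)]
  refine ⟨RingEquiv.ofBijective G ⟨hinj, hsurj⟩, fun q => ?_⟩
  show G (AdicCompletion.of (CompletionIsoAux.Ie c) (MvPolynomial (Unit ⊕ ℕ × ℕ) A ⧸ qRel A c) q) = φ q
  ext n
  rw [hGval]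
  have hofval : (AdicCompletion.of (CompletionIsoAux.Ie c) (MvPolynomial (Unit ⊕ ℕ × ℕ) A ⧸ qRel A c) q).val (n + 1) = Submodule.Quotient.mk q := rfl
  rw [hofval, CompletionIsoAux.coeffAux_mk]
end

section
/- Let A be a commutative ring and c_{i,j} ∈ A fixed constants for i ≥ 1, j ≥ 0. Let Q = A[e, d_{i,j}]/(d_{i,j} - c_{i,j} - e·d_{i,j+1}). Then the natural map Q → A[e^{±1}, d_1, d_2, ...] (Laurent polynomials in e and polynomial generators d_i) sending d_{i,j} ↦ d_i·e^{-j} - Σ_{0≤ℓ<j} c_{i,ℓ}·e^{ℓ-j} becomes an isomorphism after inverting e. -/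
/-!
STATEMENT 2: Let `Q = A[e, d_{i,j}]/(d_{i,j} - c_{i,j} - e·d_{i,j+1})`.
The natural map `Q → A[e^{±1}, d₁, d₂, …]` sending
`d_{i,j} ↦ d_i·e^{-j} - Σ_{0 ≤ ℓ < j} c_{i,ℓ}·e^{ℓ-j}` becomes an isomorphism
after inverting `e`.

The target is modelled as `MvPolynomial ℕ (LaurentPolynomial A)`, where
`X i = d_{i+1}` and `e` is the Laurent variable `T 1`.  In `Q` the variable
`d_{i+1,j}` is indexed by `Sum.inr (i, j)` and `e` by `Sum.inl ()`.  The map is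
pinned down by its values on generators, and the conclusion asserts that the
induced map from `Q[e⁻¹]` (the localization away from `e`) is a ring
isomorphism.
-/

open MvPolynomial

set_option synthInstance.maxHeartbeats 1000000
set_option maxHeartbeats 1000000


/-- Auxiliary: two ring homs out of Laurent polynomials into a commutative
semiring agreeing on `C` and on `T 1` are equal. -/
private lemma laurent_ringHom_ext {A S : Type*} [CommSemiring A] [CommSemiring S]
    (F G : LaurentPolynomial A →+* S)
    (hC : ∀ a, F (LaurentPolynomial.C a) = G (LaurentPolynomial.C a))
    (hT : F (LaurentPolynomial.T 1) = G (LaurentPolynomial.T 1)) : F = G := by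
  have h1 : ∀ (H : LaurentPolynomial A →+* S),
      H (LaurentPolynomial.T 1) * H (LaurentPolynomial.T (-1)) = 1 := fun H => by
    rw [← map_mul, ← LaurentPolynomial.T_add, show (1 : ℤ) + -1 = 0 by ring,
      LaurentPolynomial.T_zero, map_one]
  have hinv : F (LaurentPolynomial.T (-1)) = G (LaurentPolynomial.T (-1)) := by
    have h2 : F (LaurentPolynomial.T 1) * G (LaurentPolynomial.T (-1)) = 1 := by
      rw [hT]; exact h1 G
    calc F (LaurentPolynomial.T (-1))
        = F (LaurentPolynomial.T (-1)) * (F (LaurentPolynomial.T 1) *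
            G (LaurentPolynomial.T (-1))) := by rw [h2, mul_one]
      _ = (F (LaurentPolynomial.T 1) * F (LaurentPolynomial.T (-1))) *
            G (LaurentPolynomial.T (-1)) := by ring
      _ = G (LaurentPolynomial.T (-1)) := by rw [h1 F, one_mul]
  have hTn : ∀ n : ℤ, F (LaurentPolynomial.T n) = G (LaurentPolynomial.T n) := by
    intro n
    cases n with
    | ofNat m =>
        have : (LaurentPolynomial.T (m : ℤ) : LaurentPolynomial A) =
            LaurentPolynomial.T 1 ^ m := by
          rw [LaurentPolynomial.T_pow, mul_one]
        rw [Int.ofNat_eq_coe, this, map_pow, map_pow, hT]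
    | negSucc m =>
        have : (LaurentPolynomial.T (Int.negSucc m) : LaurentPolynomial A) =
            LaurentPolynomial.T (-1) ^ (m + 1) := by
          rw [LaurentPolynomial.T_pow]
          congr 1
          rw [Int.negSucc_eq]
          push_cast
          ring
        rw [this, map_pow, map_pow, hinv]
  refine RingHom.ext fun p => ?_
  induction p using LaurentPolynomial.induction_on' with
  | add p q hp hq => rw [map_add, map_add, hp, hq]
  | C_mul_T n a => rw [map_mul, map_mul, hC, hTn]

theorem localization_away_e_iso (A : Type*) [CommRing A] (c : ℕ → ℕ → A)
    (φ : (MvPolynomial (Unit ⊕ ℕ × ℕ) A ⧸ qRel A c) →+*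
      MvPolynomial ℕ (LaurentPolynomial A))
    (hC : ∀ a : A, φ (Ideal.Quotient.mk (qRel A c) (C a)) =
        C (LaurentPolynomial.C a))
    (he : φ (Ideal.Quotient.mk (qRel A c) (X (Sum.inl ()))) =
        C (LaurentPolynomial.T 1))
    (hd : ∀ i j : ℕ, φ (Ideal.Quotient.mk (qRel A c) (X (Sum.inr (i, j)))) =
        C (LaurentPolynomial.T (-(j : ℤ))) * X i -
          ∑ ℓ ∈ Finset.range j,
            C (LaurentPolynomial.C (c i ℓ) * LaurentPolynomial.T ((ℓ : ℤ) - j))) :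
    ∃ g : Localization.Away
          (Ideal.Quotient.mk (qRel A c) (X (Sum.inl ()))) ≃+*
        MvPolynomial ℕ (LaurentPolynomial A),
      ∀ q : MvPolynomial (Unit ⊕ ℕ × ℕ) A ⧸ qRel A c,
        g (algebraMap _ _ q) = φ q := by
  classical
  set mkq := Ideal.Quotient.mk (qRel A c) with hmkq
  set alg : (MvPolynomial (Unit ⊕ ℕ × ℕ) A ⧸ qRel A c) →+*
      Localization.Away (mkq (X (Sum.inl ()))) := algebraMap _ _ with halg
  -- the image of `e` in the localization is a unit
  have hu : IsUnit (alg (mkq (X (Sum.inl ())))) :=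
    IsLocalization.Away.algebraMap_isUnit
      (S := Localization.Away (mkq (X (Sum.inl ())))) (mkq (X (Sum.inl ())))
  set u : (Localization.Away (mkq (X (Sum.inl ()))))ˣ := hu.unit with hudef
  have huval : (u : Localization.Away (mkq (X (Sum.inl ())))) = alg (mkq (X (Sum.inl ()))) := hu.unit_spec
  -- the coefficient map into the localization
  set f' : A →+* Localization.Away (mkq (X (Sum.inl ()))) := alg.comp (mkq.comp (MvPolynomial.C)) with hf'
  -- the monoid hom `ℤ → Localization.Away (mkq (X (Sum.inl ())))`, `n ↦ u^n`
  set gmon : Multiplicative ℤ →* Localization.Away (mkq (X (Sum.inl ()))) :=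
    (Units.coeHom (Localization.Away (mkq (X (Sum.inl ()))))).comp
      (zpowersHom ((Localization.Away (mkq (X (Sum.inl ()))))ˣ) u) with hgmon
  -- the map from Laurent polynomials to the localization
  set ψ₀ : LaurentPolynomial A →+* Localization.Away (mkq (X (Sum.inl ()))) :=
    AddMonoidAlgebra.liftNCRingHom f' gmon (fun _ _ => Commute.all _ _) with hψ₀
  have hψ₀single : ∀ (n : ℤ) (a : A),
      ψ₀ (LaurentPolynomial.C a * LaurentPolynomial.T n) = f' a * ↑(u ^ n) := by
    intro n a
    rw [← LaurentPolynomial.single_eq_C_mul_T]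
    exact AddMonoidAlgebra.liftNC_single _ _ _ _
  have hψ₀C : ∀ a : A, ψ₀ (LaurentPolynomial.C a) = f' a := by
    intro a
    have := hψ₀single 0 a
    rw [LaurentPolynomial.T_zero, mul_one, zpow_zero] at this
    simpa using this
  have hψ₀T : ∀ n : ℤ, ψ₀ (LaurentPolynomial.T n) = ↑(u ^ n) := by
    intro n
    have := hψ₀single n 1
    rw [map_one, one_mul] at this
    simpa using this
  -- the full inverse map
  set Φ : MvPolynomial ℕ (LaurentPolynomial A) →+* Localization.Away (mkq (X (Sum.inl ()))) :=
    MvPolynomial.eval₂Hom ψ₀ (fun i => alg (mkq (X (Sum.inr (i, 0))))) with hΦ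
  -- the forward map, lifted to the localization
  have hφu : IsUnit (φ (mkq (X (Sum.inl ())))) := by
    rw [he]
    exact (LaurentPolynomial.isUnit_T 1).map (MvPolynomial.C : _ →+* _)
  set gl : Localization.Away (mkq (X (Sum.inl ()))) →+* MvPolynomial ℕ (LaurentPolynomial A) :=
    IsLocalization.Away.lift (S := Localization.Away (mkq (X (Sum.inl ()))))
      (mkq (X (Sum.inl ()))) hφu with hgl
  have hgl_eq : ∀ q, gl (alg q) = φ q := fun q =>
    IsLocalization.Away.lift_eq _ hφu q
  -- the relation in the localization
  have hrel : ∀ i j : ℕ, alg (mkq (X (Sum.inr (i, j)))) =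
      f' (c i j) + ↑u * alg (mkq (X (Sum.inr (i, j + 1)))) := by
    intro i j
    have hmem : (X (Sum.inr (i, j)) - C (c i j) -
        X (Sum.inl ()) * X (Sum.inr (i, j + 1)) : MvPolynomial (Unit ⊕ ℕ × ℕ) A)
        ∈ qRel A c := Ideal.subset_span ⟨i, j, rfl⟩
    have h0 : mkq (X (Sum.inr (i, j)) - C (c i j) -
        X (Sum.inl ()) * X (Sum.inr (i, j + 1))) = 0 :=
      (Ideal.Quotient.eq_zero_iff_mem).2 hmem
    have h1 : mkq (X (Sum.inr (i, j))) = mkq (C (c i j)) +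
        mkq (X (Sum.inl ())) * mkq (X (Sum.inr (i, j + 1))) := by
      have h2 : mkq (X (Sum.inr (i, j))) - mkq (C (c i j)) -
          mkq (X (Sum.inl ())) * mkq (X (Sum.inr (i, j + 1))) = 0 := by
        rw [← map_mul, ← map_sub, ← map_sub]; exact h0
      linear_combination h2
    rw [h1, map_add, map_mul, huval, hf']
    rfl
  -- unfolding the relation `j` times
  have hkey : ∀ i j : ℕ, alg (mkq (X (Sum.inr (i, 0)))) =
      (∑ ℓ ∈ Finset.range j, f' (c i ℓ) * ↑(u ^ (ℓ : ℤ))) +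
        ↑(u ^ (j : ℤ)) * alg (mkq (X (Sum.inr (i, j)))) := by
    intro i j
    induction j with
    | zero =>
        simp only [Finset.range_zero, Finset.sum_empty, Nat.cast_zero, zpow_zero,
          Units.val_one]
        ring
    | succ j ih =>
        rw [ih, hrel i j, Finset.sum_range_succ]
        push_cast [zpow_add, zpow_one]
        ring
  -- the composite `Φ ∘ φ` is the canonical map on generators
  have hΦφ : ∀ p : MvPolynomial (Unit ⊕ ℕ × ℕ) A, Φ (φ (mkq p)) = alg (mkq p) := by
    have : (Φ.comp φ).comp (mkq : _ →+* _) = alg.comp (mkq : _ →+* _) := by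
      apply MvPolynomial.ringHom_ext
      · intro a
        simp only [RingHom.comp_apply]
        rw [hC, hΦ]
        simpa [hf'] using hψ₀C a
      · intro s
        rcases s with s | ⟨i, j⟩
        · simp only [RingHom.comp_apply]
          rw [show (s : Unit) = () from rfl, he, hΦ]
          simp only [eval₂Hom_C]
          rw [hψ₀T 1, zpow_one, huval]
        · simp only [RingHom.comp_apply]
          rw [hd i j, map_sub, map_mul, map_sum, hΦ]
          simp only [eval₂Hom_C, eval₂Hom_X']
          rw [hψ₀T (-(j : ℤ))]
          have hsum : ∑ x ∈ Finset.range j,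
              ψ₀ (LaurentPolynomial.C (c i x) * LaurentPolynomial.T ((x : ℤ) - j))
              = ∑ x ∈ Finset.range j, f' (c i x) * ↑(u ^ ((x : ℤ) - j)) :=
            Finset.sum_congr rfl fun ℓ _ => hψ₀single _ _
          have h2 : (↑(u ^ (-(j : ℤ))) : Localization.Away (mkq (X (Sum.inl ())))) *
              ↑(u ^ (j : ℤ)) = 1 := by
            rw [← Units.val_mul, ← zpow_add, neg_add_cancel, zpow_zero, Units.val_one]
          have h3 : ∀ ℓ : ℕ, (↑(u ^ (-(j : ℤ))) :
              Localization.Away (mkq (X (Sum.inl ())))) * (f' (c i ℓ) * ↑(u ^ (ℓ : ℤ)))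
              = f' (c i ℓ) * ↑(u ^ ((ℓ : ℤ) - j)) := by
            intro ℓ
            rw [show ((ℓ : ℤ) - j) = -(j : ℤ) + ℓ by ring, zpow_add, Units.val_mul]
            ring
          have hmulsum : ∀ (F : ℕ → Localization.Away (mkq (X (Sum.inl ()))))
              (a : Localization.Away (mkq (X (Sum.inl ())))) (n : ℕ),
              a * ∑ x ∈ Finset.range n, F x = ∑ x ∈ Finset.range n, a * F x := by
            intro F a n
            induction n with
            | zero =>
                simp only [Finset.range_zero, Finset.sum_empty]
                ring
            | succ n ih =>
                rw [Finset.sum_range_succ, Finset.sum_range_succ, ← ih]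
                ring
          have hS : (↑(u ^ (-(j : ℤ))) : Localization.Away (mkq (X (Sum.inl ())))) *
                ∑ x ∈ Finset.range j, f' (c i x) * ↑(u ^ (x : ℤ))
              = ∑ x ∈ Finset.range j, f' (c i x) * ↑(u ^ ((x : ℤ) - j)) :=
            (hmulsum _ _ j).trans (Finset.sum_congr rfl fun ℓ _ => h3 ℓ)
          rw [hsum, hkey i j, ← hS]
          have h4 : (↑(u ^ (-(j : ℤ))) : Localization.Away (mkq (X (Sum.inl ())))) *
                ((∑ ℓ ∈ Finset.range j, f' (c i ℓ) * ↑(u ^ (ℓ : ℤ))) +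
                  ↑(u ^ (j : ℤ)) * alg (mkq (X (Sum.inr (i, j))))) -
              ↑(u ^ (-(j : ℤ))) * ∑ x ∈ Finset.range j, f' (c i x) * ↑(u ^ (x : ℤ))
              = (↑(u ^ (-(j : ℤ))) * ↑(u ^ (j : ℤ))) *
                  alg (mkq (X (Sum.inr (i, j)))) := by ring
          rw [h4, h2]
          ring
    intro p
    exact RingHom.congr_fun this p
  -- `gl ∘ Φ = id`
  have hglΦ : gl.comp Φ = RingHom.id _ := by
    apply MvPolynomial.ringHom_ext
    · have hext : gl.comp ψ₀ = (MvPolynomial.C : LaurentPolynomial A →+* _) := by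
        apply laurent_ringHom_ext
        · intro a
          simp only [RingHom.comp_apply]
          rw [hψ₀C a, hf']
          simp only [RingHom.comp_apply]
          exact (hgl_eq _).trans (hC a)
        · simp only [RingHom.comp_apply]
          rw [hψ₀T 1, zpow_one, huval]
          exact (hgl_eq _).trans he
      intro f
      simp only [RingHom.comp_apply, RingHom.id_apply]
      rw [hΦ]
      simp only [eval₂Hom_C]
      exact RingHom.congr_fun hext f
    · intro i
      simp only [RingHom.comp_apply, RingHom.id_apply]
      rw [hΦ]
      simp only [eval₂Hom_X']
      rw [hgl_eq, hd i 0]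
      simp
  -- `Φ ∘ gl = id`
  have hΦgl_alg : ∀ q, Φ (gl (alg q)) = alg q := by
    intro q
    obtain ⟨p, rfl⟩ := Ideal.Quotient.mk_surjective q
    rw [hgl_eq]
    exact hΦφ p
  have hΦgl : Φ.comp gl = RingHom.id _ := by
    refine RingHom.ext fun z => ?_
    simp only [RingHom.comp_apply, RingHom.id_apply]
    obtain ⟨⟨r, s⟩, hz⟩ := IsLocalization.surj (M := Submonoid.powers (mkq (X (Sum.inl ()))))
      (S := Localization.Away (mkq (X (Sum.inl ())))) z
    have hsu : IsUnit (alg (s : MvPolynomial (Unit ⊕ ℕ × ℕ) A ⧸ qRel A c)) := by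
      obtain ⟨n, hn⟩ := s.2
      rw [← hn, map_pow]
      exact hu.pow n
    have h1 : Φ (gl z) * alg (s : MvPolynomial (Unit ⊕ ℕ × ℕ) A ⧸ qRel A c) = alg r := by
      have h0 : Φ (gl (z * alg s)) = Φ (gl (alg r)) := congrArg (fun w => Φ (gl w)) hz
      simpa only [map_mul, hΦgl_alg] using h0
    exact hsu.mul_right_cancel (h1.trans hz.symm)
  refine ⟨RingEquiv.ofRingHom gl Φ hglΦ hΦgl, fun q => hgl_eq q⟩
end

section
/- Let A be a commutative ring, c_{i,j} ∈ A, and R = A[e, d_{i,j}]/(d_{i,j} - c_{i,j} - e·d_{i,j+1}). Then every element f ∈ R can be written as f = f_0(d_{i,j}) + e·f_1(d_{i,0}, e), where f_0 is a polynomial over A in the variables d_{i,j} alone and f_1 is a polynomial over A in e and the variables d_{i,0}. -/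
open MvPolynomial

namespace NFaux

/-- Embedding of the "allowed f₁ variables" (e and the d_{i,0}) -/
def ι : Unit ⊕ ℕ → Unit ⊕ ℕ × ℕ := Sum.map id fun i => (i, 0)

variable {A : Type*} [CommRing A] (c : ℕ → ℕ → A)

local notation "Q" => Ideal.Quotient.mk (qRel A c)

def Good (x : MvPolynomial (Unit ⊕ ℕ × ℕ) A ⧸ qRel A c) : Prop :=
  ∃ (q : MvPolynomial (ℕ × ℕ) A) (r : MvPolynomial (Unit ⊕ ℕ) A),
    x = Q (rename Sum.inr q) + Q (X (Sum.inl ())) * Q (rename ι r)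

lemma good_add {x y} (hx : Good c x) (hy : Good c y) : Good c (x + y) := by
  obtain ⟨q, r, rfl⟩ := hx
  obtain ⟨q', r', rfl⟩ := hy
  exact ⟨q + q', r + r', by simp [map_add]; ring⟩

lemma good_sub {x y} (hx : Good c x) (hy : Good c y) : Good c (x - y) := by
  obtain ⟨q, r, rfl⟩ := hx
  obtain ⟨q', r', rfl⟩ := hy
  exact ⟨q - q', r - r', by simp [map_sub]; ring⟩

lemma good_e_mul_renameι (r : MvPolynomial (Unit ⊕ ℕ) A) :
    Good c (Q (X (Sum.inl ())) * Q (rename ι r)) :=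
  ⟨0, r, by simp⟩

lemma good_renameInr (q : MvPolynomial (ℕ × ℕ) A) :
    Good c (Q (rename Sum.inr q)) :=
  ⟨q, 0, by simp⟩

/-- generic decomposition: split off the part not involving the `inl` variable. -/
lemma decomp {τ : Type*} (h : MvPolynomial (Unit ⊕ τ) A) :
    ∃ (q : MvPolynomial τ A) (h' : MvPolynomial (Unit ⊕ τ) A),
      h = rename Sum.inr q + X (Sum.inl ()) * h' := by
  induction h using MvPolynomial.induction_on with
  | C a => exact ⟨C a, 0, by simp⟩
  | add p q hp hq =>
    obtain ⟨q₁, h₁, rfl⟩ := hp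
    obtain ⟨q₂, h₂, rfl⟩ := hq
    exact ⟨q₁ + q₂, h₁ + h₂, by simp [map_add]; ring⟩
  | mul_X p v hp =>
    obtain ⟨q₁, h₁, rfl⟩ := hp
    cases v with
    | inl u =>
      exact ⟨0, rename Sum.inr q₁ + X (Sum.inl ()) * h₁, by cases u; simp; ring⟩
    | inr t =>
      exact ⟨q₁ * X t, h₁ * X (Sum.inr t), by simp [map_mul]; ring⟩

lemma renameι_decomp (r : MvPolynomial (Unit ⊕ ℕ) A) :
    ∃ (q : MvPolynomial (ℕ × ℕ) A) (r' : MvPolynomial (Unit ⊕ ℕ) A),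
      rename ι r = rename Sum.inr q + X (Sum.inl ()) * rename ι r' := by
  obtain ⟨q, r', hr⟩ := decomp r
  refine ⟨rename (fun i => (i, 0)) q, r', ?_⟩
  rw [hr]
  simp only [map_add, map_mul, rename_rename, rename_X]
  rfl

lemma good_renameι (r : MvPolynomial (Unit ⊕ ℕ) A) : Good c (Q (rename ι r)) := by
  obtain ⟨q, r', hr⟩ := renameι_decomp r
  exact ⟨q, r', by rw [hr]; simp [map_add, map_mul]⟩

lemma rel (i j : ℕ) :
    Q (X (Sum.inl ()) * X (Sum.inr (i, j + 1))) = Q (X (Sum.inr (i, j)) - C (c i j)) := by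
  rw [Ideal.Quotient.eq]
  have h : (X (Sum.inl ()) * X (Sum.inr (i, j + 1)) - (X (Sum.inr (i, j)) - C (c i j))
      : MvPolynomial (Unit ⊕ ℕ × ℕ) A)
      = -(X (Sum.inr (i, j)) - C (c i j) - X (Sum.inl ()) * X (Sum.inr (i, j + 1))) := by ring
  rw [h]
  exact neg_mem (Ideal.subset_span ⟨i, j, rfl⟩)

lemma good_mul_X (i j : ℕ) (r : MvPolynomial (Unit ⊕ ℕ) A) :
    Good c (Q (X (Sum.inl ())) * Q (rename ι r) * Q (X (Sum.inr (i, j)))) := by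
  induction j generalizing r with
  | zero =>
    have h : (X (Sum.inr (i, 0)) : MvPolynomial (Unit ⊕ ℕ × ℕ) A)
        = rename ι (X (Sum.inr i)) := by simp [ι]
    rw [h, mul_assoc, ← map_mul, ← map_mul (rename ι)]
    exact good_e_mul_renameι c _
  | succ j ih =>
    have key : Q (X (Sum.inl ())) * Q (rename ι r) * Q (X (Sum.inr (i, j + 1)))
        = Q (X (Sum.inr (i, j))) * Q (rename ι r)
          - Q (rename ι (C (c i j) * r)) := by
      rw [mul_right_comm, ← map_mul, rel, map_sub, sub_mul, map_mul, map_mul, rename_C]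
    rw [key]
    refine good_sub c ?_ (good_renameι c _)
    obtain ⟨q, r', hr⟩ := renameι_decomp r
    have h2 : Q (X (Sum.inr (i, j))) * Q (rename ι r)
        = Q (rename Sum.inr (X (i, j) * q))
          + Q (X (Sum.inl ())) * Q (rename ι r') * Q (X (Sum.inr (i, j))) := by
      rw [hr]
      simp only [map_add, map_mul, mul_add, rename_X]
      ring
    rw [h2]
    exact good_add c (good_renameInr c _) (ih r')

lemma good_e_mul_renameInr (q : MvPolynomial (ℕ × ℕ) A) :
    Good c (Q (X (Sum.inl ())) * Q (rename Sum.inr q)) := by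
  induction q using MvPolynomial.induction_on with
  | C a =>
    have h : (rename (Sum.inr : ℕ × ℕ → Unit ⊕ ℕ × ℕ) (C a)) = rename ι (C a) := by simp
    rw [h]; exact good_e_mul_renameι c _
  | add p q hp hq =>
    rw [map_add, map_add, mul_add]
    exact good_add c hp hq
  | mul_X p v hp =>
    obtain ⟨q', r', h⟩ := hp
    have h2 : Q (X (Sum.inl ())) * Q (rename Sum.inr (p * X v))
        = Q (rename Sum.inr (q' * X v))
          + Q (X (Sum.inl ())) * Q (rename ι r') * Q (X (Sum.inr v)) := by
      rw [map_mul, rename_X, map_mul, ← mul_assoc, h]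
      simp only [map_mul, rename_X, add_mul]
      try ring
    rw [h2]
    exact good_add c (good_renameInr c _) (good_mul_X c v.1 v.2 r')

lemma good_e_mul {x} (hx : Good c x) : Good c (Q (X (Sum.inl ())) * x) := by
  obtain ⟨q, r, rfl⟩ := hx
  rw [mul_add]
  refine good_add c (good_e_mul_renameInr c q) ?_
  have h : rename ι (X (Sum.inl ()) * r) = X (Sum.inl ()) * rename ι r := by
    rw [map_mul, rename_X]; rfl
  have h3 : Q (X (Sum.inl ())) * Q (rename ι r) = Q (rename ι (X (Sum.inl ()) * r)) := by
    rw [h, map_mul]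
  rw [h3]
  exact good_e_mul_renameι c _

lemma good_all (h : MvPolynomial (Unit ⊕ ℕ × ℕ) A) : Good c (Q h) := by
  induction h using MvPolynomial.induction_on with
  | C a =>
    have : (C a : MvPolynomial (Unit ⊕ ℕ × ℕ) A) = rename Sum.inr (C a) := by simp
    rw [this]; exact good_renameInr c _
  | add p q hp hq => rw [map_add]; exact good_add c hp hq
  | mul_X p v hp =>
    rw [map_mul]
    cases v with
    | inl u => cases u; rw [mul_comm]; exact good_e_mul c hp
    | inr t =>
      obtain ⟨q, r, hq⟩ := hp
      rw [hq, add_mul]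
      refine good_add c ?_ (good_mul_X c t.1 t.2 r)
      rw [← map_mul, show (X (Sum.inr t) : MvPolynomial (Unit ⊕ ℕ × ℕ) A)
          = rename Sum.inr (X t) from (rename_X _ _).symm, ← map_mul (rename Sum.inr)]
      exact good_renameInr c _

end NFaux

theorem normal_form_in_R (A : Type*) [CommRing A] (c : ℕ → ℕ → A)
    (f : MvPolynomial (Unit ⊕ ℕ × ℕ) A ⧸ qRel A c) :
    ∃ f₀ f₁ : MvPolynomial (Unit ⊕ ℕ × ℕ) A,
      (∀ v ∈ f₀.vars, ∃ p : ℕ × ℕ, v = Sum.inr p) ∧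
      (∀ v ∈ f₁.vars, v = Sum.inl () ∨ ∃ i : ℕ, v = Sum.inr (i, 0)) ∧
      f = Ideal.Quotient.mk (qRel A c) f₀ +
          Ideal.Quotient.mk (qRel A c) (X (Sum.inl ())) *
            Ideal.Quotient.mk (qRel A c) f₁ := by
  obtain ⟨h, rfl⟩ := Ideal.Quotient.mk_surjective f
  obtain ⟨q, r, hqr⟩ := NFaux.good_all c h
  refine ⟨rename Sum.inr q, rename NFaux.ι r, ?_, ?_, hqr⟩
  · intro v hv
    obtain ⟨p, _, rfl⟩ := Finset.mem_image.mp (MvPolynomial.vars_rename _ _ hv)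
    exact ⟨p, rfl⟩
  · intro v hv
    obtain ⟨p, _, rfl⟩ := Finset.mem_image.mp (MvPolynomial.vars_rename _ _ hv)
    cases p with
    | inl u => left; cases u; rfl
    | inr i => right; exact ⟨i, rfl⟩
end

section
/- Let A be a commutative ring, c_{i,j} ∈ A, and let R = A[e, d_{i,j}]/(d_{i,j} - c_{i,j} - e·d_{i,j+1}). The kernel of the natural surjection A[d_{i,j} : i ≥ 1, j ≥ 0] → (the A-subalgebra of R generated by the d_{i,j}) is generated by the elements (d_{i,j} - c_{i,j})·d_{k,ℓ+1} - d_{i,j+1}·(d_{k,ℓ} - c_{k,ℓ}) for i, k ≥ 1 and j, ℓ ≥ 0. -/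
/-!
STATEMENT 7: Let `R = A[e, d_{i,j}]/(d_{i,j} - c_{i,j} - e·d_{i,j+1})`.
The kernel of the natural map `A[d_{i,j} : i ≥ 1, j ≥ 0] → R` (whose image is
the `A`-subalgebra of `R` generated by the `d_{i,j}`) is generated by the
elements `(d_{i,j} - c_{i,j})·d_{k,ℓ+1} - d_{i,j+1}·(d_{k,ℓ} - c_{k,ℓ})`.

The variable `d_{i+1,j}` is indexed by `(i, j) : ℕ × ℕ` (resp. `Sum.inr (i,j)`;
the index `i : ℕ` corresponds to the subscript `i + 1 ≥ 1`), and `e` by `Sum.inl ()`.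
-/

open MvPolynomial

namespace Aux

variable {A : Type*} [CommRing A] {σ α : Type*}

/-- Multiplication by a variable is injective. -/
lemma X_mul_cancel (s : σ) {p : MvPolynomial σ A} (h : X s * p = 0) : p = 0 := by
  ext m
  have := coeff_X_mul m s p
  rw [h, coeff_zero] at this
  simp [← this]

/-- An antisymmetric (with zero diagonal) sum over a square vanishes. -/
lemma sum_antisym {M : Type*} [AddCommGroup M] (F : Finset α) (f : α → α → M)
    (h : ∀ a b, f a b + f b a = 0) (hd : ∀ a, f a a = 0) :
    ∑ x ∈ F ×ˢ F, f x.1 x.2 = 0 := by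
  refine Finset.sum_involution (fun x _ => (x.2, x.1)) (fun x _ => h x.1 x.2)
    (fun x hx hfx => ?_) (fun x hx => ?_) (fun x hx => rfl)
  · intro hgx
    have h1 : x.2 = x.1 := congrArg Prod.fst hgx
    exact hfx (h1 ▸ hd x.1)
  · simp only [Finset.mem_product] at hx ⊢
    exact ⟨hx.2, hx.1⟩

end Aux

namespace Aux2

open Aux

variable {A : Type*} [CommRing A] {σ α : Type*}

noncomputable def kill (T : Set σ) [DecidablePred (· ∈ T)] :
    MvPolynomial σ A →ₐ[A] MvPolynomial σ A :=
  aeval (fun s => if s ∈ T then 0 else X s)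

lemma kill_X_mem (T : Set σ) [DecidablePred (· ∈ T)] {s : σ} (hs : s ∈ T) :
    kill (A := A) T (X s) = 0 := by simp [kill, hs]

lemma kill_X_not_mem (T : Set σ) [DecidablePred (· ∈ T)] {s : σ} (hs : s ∉ T) :
    kill (A := A) T (X s) = X s := by simp [kill, hs]

lemma kill_span_eq_zero (T : Set σ) [DecidablePred (· ∈ T)] {p : MvPolynomial σ A}
    (hp : p ∈ Ideal.span { q : MvPolynomial σ A | ∃ v ∈ T, q = X v }) :
    kill T p = 0 := by
  have : Ideal.span { q : MvPolynomial σ A | ∃ v ∈ T, q = X v } ≤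
      RingHom.ker (kill (A := A) T).toRingHom := by
    rw [Ideal.span_le]
    rintro q ⟨v, hv, rfl⟩
    exact kill_X_mem T hv
  exact this hp

lemma sub_kill_mem_span (T : Set σ) [DecidablePred (· ∈ T)] (p : MvPolynomial σ A) :
    p - kill T p ∈ Ideal.span { q : MvPolynomial σ A | ∃ v ∈ T, q = X v } := by
  induction p using MvPolynomial.induction_on with
  | C a => simp [kill]
  | add p q hp hq =>
    have := Ideal.add_mem _ hp hq
    rw [map_add]
    convert this using 1
    ring
  | mul_X p s hp =>
    rw [map_mul]
    by_cases hs : s ∈ T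
    · rw [kill_X_mem T hs, mul_zero, sub_zero]
      exact Ideal.mul_mem_left _ p (Ideal.subset_span ⟨s, hs, rfl⟩)
    · rw [kill_X_not_mem T hs]
      have : p * X s - kill T p * X s = (p - kill T p) * X s := by ring
      rw [this]
      exact Ideal.mul_mem_right _ _ hp

/-- Extraction: if `h * X s` lies in the ideal generated by variables `X (t b)`, `b ∈ F`,
and `s` is none of them, then `h` is an explicit combination of those variables. -/
lemma extraction [Nontrivial A] {t : α → σ} (ht : Function.Injective t) (F : Finset α)
    {s : σ} (hs : ∀ b ∈ F, t b ≠ s) {h : MvPolynomial σ A}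
    (hmem : h * X s ∈ Ideal.span { q : MvPolynomial σ A | ∃ b ∈ F, q = X (t b) }) :
    ∃ q : α → MvPolynomial σ A, h = ∑ b ∈ F, q b * X (t b) := by
  classical
  set T : Set σ := ↑(F.image t) with hT
  have hTmem : ∀ v : σ, v ∈ T ↔ ∃ b ∈ F, t b = v := by
    intro v
    simp only [hT, Finset.coe_image, Set.mem_image, Finset.mem_coe]
  have hsetT : { q : MvPolynomial σ A | ∃ b ∈ F, q = X (t b) }
      = { q : MvPolynomial σ A | ∃ v ∈ T, q = X v } := by
    ext q
    constructor
    · rintro ⟨b, hb, rfl⟩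
      exact ⟨t b, (hTmem (t b)).2 ⟨b, hb, rfl⟩, rfl⟩
    · rintro ⟨v, hv, rfl⟩
      obtain ⟨b, hb, rfl⟩ := (hTmem v).1 hv
      exact ⟨b, hb, rfl⟩
  rw [hsetT] at hmem
  have hkill : kill T h * X s = 0 := by
    have h0 := kill_span_eq_zero T hmem
    rw [map_mul, kill_X_not_mem] at h0
    · exact h0
    · intro hsT
      obtain ⟨b, hb, hbs⟩ := (hTmem s).1 hsT
      exact hs b hb hbs
  have hk0 : kill T h = 0 := by
    have := X_mul_cancel s (p := kill T h) (by rw [mul_comm]; exact hkill)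
    exact this
  have hmem2 : h ∈ Ideal.span { q : MvPolynomial σ A | ∃ v ∈ T, q = X v } := by
    have := sub_kill_mem_span T h
    rwa [hk0, sub_zero] at this
  -- now convert to finset span
  have hset2 : { q : MvPolynomial σ A | ∃ v ∈ T, q = X v }
      = ↑(F.image (fun b => (X (t b) : MvPolynomial σ A))) := by
    ext q
    simp only [Set.mem_setOf_eq, Finset.coe_image, Set.mem_image, Finset.mem_coe]
    constructor
    · rintro ⟨v, hv, rfl⟩
      obtain ⟨b, hb, rfl⟩ := (hTmem v).1 hv
      exact ⟨b, hb, rfl⟩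
    · rintro ⟨b, hb, rfl⟩
      exact ⟨t b, (hTmem (t b)).2 ⟨b, hb, rfl⟩, rfl⟩
  rw [hset2] at hmem2
  rw [Ideal.span, Submodule.mem_span_finset] at hmem2
  obtain ⟨f, -, hf⟩ := hmem2
  refine ⟨fun b => f (X (t b)), ?_⟩
  rw [← hf, Finset.sum_image (fun a _ b _ hab => ht (X_injective hab))]
  simp [smul_eq_mul, mul_comm]

end Aux2

namespace Aux3
open Aux Aux2

variable {A : Type*} [CommRing A] {σ α : Type*}

/-- Syzygies of distinct variables are Koszul. -/
lemma syzygy [Nontrivial A] {t : α → σ} (ht : Function.Injective t) (F : Finset α)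
    (g : α → MvPolynomial σ A) (hg : ∑ a ∈ F, g a * X (t a) = 0) :
    ∃ w : α → α → MvPolynomial σ A, (∀ a b, w b a = - w a b) ∧ (∀ a, w a a = 0) ∧
      (∀ a ∈ F, g a = ∑ b ∈ F, w a b * X (t b)) := by
  classical
  induction F using Finset.induction generalizing g with
  | empty => exact ⟨0, by simp, by simp, by simp⟩
  | @insert a₀ F ha₀ ih =>
    rw [Finset.sum_insert ha₀] at hg
    have hmem : g a₀ * X (t a₀) ∈
        Ideal.span { q : MvPolynomial σ A | ∃ b ∈ F, q = X (t b) } := by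
      have h1 : g a₀ * X (t a₀) = -∑ x ∈ F, g x * X (t x) :=
        eq_neg_of_add_eq_zero_left hg
      rw [h1]
      exact neg_mem (Ideal.sum_mem _ fun b hb =>
        Ideal.mul_mem_left _ _ (Ideal.subset_span ⟨b, hb, rfl⟩))
    have hs : ∀ b ∈ F, t b ≠ t a₀ := fun b hb hbe => ha₀ (ht hbe ▸ hb)
    obtain ⟨q, hq⟩ := extraction ht F hs hmem
    have hg'sum : ∑ a ∈ F, (g a + q a * X (t a₀)) * X (t a) = 0 := by
      have e : ∑ a ∈ F, (g a + q a * X (t a₀)) * X (t a)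
          = (∑ b ∈ F, q b * X (t b)) * X (t a₀) + ∑ a ∈ F, g a * X (t a) := by
        rw [Finset.sum_mul, ← Finset.sum_add_distrib]
        exact Finset.sum_congr rfl fun a _ => by ring
      rw [e, ← hq, hg]
    obtain ⟨w', hw'anti, hw'diag, hw'⟩ := ih (fun a => g a + q a * X (t a₀)) hg'sum
    refine ⟨fun a b =>
      if a = a₀ then (if b = a₀ then 0 else (if b ∈ F then q b else 0))
      else (if b = a₀ then - (if a ∈ F then q a else 0) else w' a b), ?_, ?_, ?_⟩
    · intro a b
      by_cases hA : a = a₀ <;> by_cases hB : b = a₀ <;>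
        simp [hA, hB, hw'anti a b]
    · intro a
      by_cases hA : a = a₀ <;> simp [hA, hw'diag a]
    · intro a haF
      by_cases hA : a = a₀
    -- case a = a₀
      · subst hA
        rw [Finset.sum_insert ha₀]
        beta_reduce
        have e0 : (if a = a then (if a = a then (0 : MvPolynomial σ A)
            else (if a ∈ F then q a else 0))
            else (if a = a then - (if a ∈ F then q a else 0) else w' a a)) = 0 := by simp
        rw [e0, zero_mul, zero_add, hq]
        refine Finset.sum_congr rfl fun b hb => ?_
        have hba : ¬ b = a := fun h => ha₀ (h ▸ hb)
        have e1 : (if a = a then (if b = a then (0 : MvPolynomial σ A)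
            else (if b ∈ F then q b else 0))
            else (if b = a then - (if a ∈ F then q a else 0) else w' a b)) = q b := by
          simp [hba, hb]
        rw [e1]
    -- case a ∈ F
      · have haF' : a ∈ F := (Finset.mem_insert.1 haF).resolve_left hA
        rw [Finset.sum_insert ha₀]
        beta_reduce
        have e0 : (if a = a₀ then (if a₀ = a₀ then (0 : MvPolynomial σ A)
            else (if a₀ ∈ F then q a₀ else 0))
            else (if a₀ = a₀ then - (if a ∈ F then q a else 0) else w' a a₀)) = - q a := by
          simp [hA, haF']
        have e1 : ∀ b ∈ F, (if a = a₀ then (if b = a₀ then (0 : MvPolynomial σ A)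
            else (if b ∈ F then q b else 0))
            else (if b = a₀ then - (if a ∈ F then q a else 0) else w' a b))
              * X (t b) = w' a b * X (t b) := by
          intro b hb
          have hba : ¬ b = a₀ := fun h => ha₀ (h ▸ hb)
          simp [hA, hba]
        rw [e0, Finset.sum_congr rfl e1]
        have hw'' := hw' a haF'
        rw [← hw'']
        ring

end Aux3

namespace Main
open Aux Aux2 Aux3 Polynomial

variable {A : Type*} [CommRing A]

noncomputable abbrev BB (A : Type*) [CommRing A] := MvPolynomial (ℕ × ℕ) A

variable (c : ℕ → ℕ → A)

noncomputable def uu (a : ℕ × ℕ) : BB A := X a - MvPolynomial.C (c a.1 a.2)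
noncomputable def vv (a : ℕ × ℕ) : BB A := X (a.1, a.2 + 1)
noncomputable def rho (a : ℕ × ℕ) : Polynomial (BB A) :=
  Polynomial.C (uu c a) - Polynomial.X * Polynomial.C (vv (A := A) a)

noncomputable def Jid : Ideal (BB A) :=
  Ideal.span { q : MvPolynomial (ℕ × ℕ) A | ∃ i j k l : ℕ,
      q = (X (i, j) - MvPolynomial.C (c i j)) * X (k, l + 1)
          - X (i, j + 1) * (X (k, l) - MvPolynomial.C (c k l)) }

lemma qgen_mem (a b : ℕ × ℕ) : uu c a * vv b - vv a * uu c b ∈ Jid c := by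
  apply Ideal.subset_span
  exact ⟨a.1, a.2, b.1, b.2, rfl⟩

lemma tau_inj : Function.Injective (fun a : ℕ × ℕ => (a.1, a.2 + 1)) := by
  rintro ⟨i, j⟩ ⟨k, l⟩ h
  simp only [Prod.mk.injEq] at h
  exact Prod.ext h.1 (Nat.succ_injective h.2)

lemma coeff_mul_rho_zero (p : Polynomial (BB A)) (a : ℕ × ℕ) :
    (p * rho c a).coeff 0 = p.coeff 0 * uu c a := by
  have e : p * rho c a = p * Polynomial.C (uu c a) - (p * Polynomial.X) * Polynomial.C (vv a) := by
    rw [rho]; ring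
  rw [e, Polynomial.coeff_sub, Polynomial.coeff_mul_C, Polynomial.coeff_mul_C,
    Polynomial.mul_coeff_zero, Polynomial.coeff_X_zero, mul_zero, zero_mul, sub_zero]

lemma coeff_mul_rho_succ (p : Polynomial (BB A)) (a : ℕ × ℕ) (k : ℕ) :
    (p * rho c a).coeff (k + 1) = p.coeff (k + 1) * uu c a - p.coeff k * vv a := by
  have e : p * rho c a = p * Polynomial.C (uu c a) - (p * Polynomial.X) * Polynomial.C (vv a) := by
    rw [rho]; ring
  rw [e, Polynomial.coeff_sub, Polynomial.coeff_mul_C, Polynomial.coeff_mul_C,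
    Polynomial.coeff_mul_X]

lemma sum_coeffs (F : Finset (ℕ × ℕ)) (co : ℕ × ℕ → Polynomial (BB A)) (p : BB A)
    (hsum : ∑ a ∈ F, co a * rho c a = Polynomial.C p) :
    p = (∑ a ∈ F, (co a).coeff 0 * uu c a) ∧
      ∀ k, ∑ a ∈ F, ((co a).coeff (k + 1) * uu c a - (co a).coeff k * vv a) = 0 := by
  constructor
  · have h0 := congrArg (fun q => Polynomial.coeff q 0) hsum
    simp only [Polynomial.finset_sum_coeff, Polynomial.coeff_C, if_pos rfl] at h0
    rw [Finset.sum_congr rfl (fun a _ => coeff_mul_rho_zero c (co a) a)] at h0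
    exact h0.symm
  · intro k
    have h1 := congrArg (fun q => Polynomial.coeff q (k + 1)) hsum
    simp only [Polynomial.finset_sum_coeff, Polynomial.coeff_C,
      if_neg (Nat.succ_ne_zero k)] at h1
    rw [Finset.sum_congr rfl (fun a _ => coeff_mul_rho_succ c (co a) a k)] at h1
    exact h1

lemma coeff_CXpow_rho (r : BB A) (n m : ℕ) (b : ℕ × ℕ) :
    (Polynomial.C r * Polynomial.X ^ n * rho c b).coeff m
      = (if m = n then r * uu c b else 0) - (if m = n + 1 then r * vv b else 0) := by
  have e : Polynomial.C r * Polynomial.X ^ n * rho c b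
      = Polynomial.C (r * uu c b) * Polynomial.X ^ n
        - Polynomial.C (r * vv (A := A) b) * Polynomial.X ^ (n + 1) := by
    rw [rho, map_mul, map_mul]; ring
  rw [e, Polynomial.coeff_sub, Polynomial.coeff_C_mul, Polynomial.coeff_C_mul,
    Polynomial.coeff_X_pow, Polynomial.coeff_X_pow]
  simp only [mul_ite, mul_one, mul_zero]

end Main

namespace Main
open Aux Aux2 Aux3 Polynomial

variable {A : Type*} [CommRing A] (c : ℕ → ℕ → A)

lemma main_induction [Nontrivial A] :
    ∀ N : ℕ, ∀ (F : Finset (ℕ × ℕ)) (co : ℕ × ℕ → Polynomial (BB A)) (p : BB A),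
      (∀ a ∈ F, (co a).natDegree ≤ N) →
      (∑ a ∈ F, co a * rho c a = Polynomial.C p) → p ∈ Jid c := by
  intro N
  induction N with
  | zero =>
    intro F co p hdeg hsum
    obtain ⟨hp, hk⟩ := sum_coeffs c F co p hsum
    have hsyz : ∑ a ∈ F, (co a).coeff 0 * X (a.1, a.2 + 1) = 0 := by
      have h0 := hk 0
      have e : ∀ a ∈ F, (co a).coeff 1 * uu c a - (co a).coeff 0 * vv a
          = - ((co a).coeff 0 * X (a.1, a.2 + 1)) := by
        intro a ha
        have h1 : (co a).coeff 1 = 0 :=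
          Polynomial.coeff_eq_zero_of_natDegree_lt (lt_of_le_of_lt (hdeg a ha) one_pos)
        rw [h1, zero_mul, zero_sub, vv]
      rw [Finset.sum_congr rfl e, Finset.sum_neg_distrib, neg_eq_zero] at h0
      exact h0
    obtain ⟨w, hwa, hwd, hwg⟩ := syzygy tau_inj F (fun a => (co a).coeff 0) hsyz
    have hmk : Ideal.Quotient.mk (Jid c) p = 0 := by
      rw [hp, map_sum]
      have e2 : ∀ a ∈ F, Ideal.Quotient.mk (Jid c) ((co a).coeff 0 * uu c a)
          = ∑ b ∈ F, Ideal.Quotient.mk (Jid c) (w a b * (vv b * uu c a)) := by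
        intro a ha
        rw [hwg a ha, Finset.sum_mul, map_sum]
        refine Finset.sum_congr rfl fun b hb => ?_
        congr 1
        rw [vv]; ring
      rw [Finset.sum_congr rfl e2, ← Finset.sum_product']
      refine sum_antisym F
        (fun a b => Ideal.Quotient.mk (Jid c) (w a b * (vv b * uu c a))) ?_ ?_
      · intro a b
        beta_reduce
        rw [← map_add]
        have e3 : w a b * (vv b * uu c a) + w b a * (vv a * uu c b)
            = w a b * (uu c a * vv b - vv a * uu c b) := by rw [hwa a b]; ring
        rw [e3]
        exact Ideal.Quotient.eq_zero_iff_mem.2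
          (Ideal.mul_mem_left _ _ (qgen_mem c a b))
      · intro a
        beta_reduce
        rw [hwd a, zero_mul, map_zero]
    exact Ideal.Quotient.eq_zero_iff_mem.1 hmk
  | succ N ih =>
    intro F co p hdeg hsum
    obtain ⟨hp, hk⟩ := sum_coeffs c F co p hsum
    have hsyz : ∑ a ∈ F, (co a).coeff (N + 1) * X (a.1, a.2 + 1) = 0 := by
      have h0 := hk (N + 1)
      have e : ∀ a ∈ F, (co a).coeff (N + 2) * uu c a - (co a).coeff (N + 1) * vv a
          = - ((co a).coeff (N + 1) * X (a.1, a.2 + 1)) := by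
        intro a ha
        have h1 : (co a).coeff (N + 2) = 0 :=
          Polynomial.coeff_eq_zero_of_natDegree_lt
            (lt_of_le_of_lt (hdeg a ha) (by omega))
        rw [h1, zero_mul, zero_sub, vv]
      rw [Finset.sum_congr rfl e, Finset.sum_neg_distrib, neg_eq_zero] at h0
      exact h0
    obtain ⟨w, hwa, hwd, hwg⟩ :=
      syzygy tau_inj F (fun a => (co a).coeff (N + 1)) hsyz
    -- corrected coefficients
    set co' : ℕ × ℕ → Polynomial (BB A) := fun a =>
      co a + ∑ b ∈ F, Polynomial.C (w a b) * Polynomial.X ^ N * rho c b with hco'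
    have hsum' : ∑ a ∈ F, co' a * rho c a = Polynomial.C p := by
      have e1 : ∀ a ∈ F, co' a * rho c a = co a * rho c a
          + ∑ b ∈ F, Polynomial.C (w a b) * Polynomial.X ^ N * (rho c b * rho c a) := by
        intro a ha
        rw [hco']
        beta_reduce
        rw [add_mul, Finset.sum_mul]
        refine congrArg (co a * rho c a + ·) ?_
        exact Finset.sum_congr rfl fun b hb => by ring
      rw [Finset.sum_congr rfl e1, Finset.sum_add_distrib, ← Finset.sum_product']
      have e2 : ∑ x ∈ F ×ˢ F,
          Polynomial.C (w x.1 x.2) * Polynomial.X ^ N * (rho c x.2 * rho c x.1) = 0 := by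
        refine sum_antisym F
          (fun a b => Polynomial.C (w a b) * Polynomial.X ^ N * (rho c b * rho c a)) ?_ ?_
        · intro a b
          beta_reduce
          rw [hwa a b, map_neg]
          ring
        · intro a
          beta_reduce
          rw [hwd a, map_zero, zero_mul, zero_mul]
      rw [e2, add_zero, hsum]
    have hdeg' : ∀ a ∈ F, (co' a).natDegree ≤ N := by
      intro a ha
      rw [Polynomial.natDegree_le_iff_coeff_eq_zero]
      intro m hm
      rw [hco']
      beta_reduce
      rw [Polynomial.coeff_add, Polynomial.finset_sum_coeff]
      rw [Finset.sum_congr rfl (fun b _ => coeff_CXpow_rho c (w a b) N m b)]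
      rcases eq_or_lt_of_le (Nat.succ_le_of_lt hm) with he | hl
      · -- m = N + 1
        rw [← he]
        have e3 : ∀ b ∈ F,
            (if N + 1 = N then w a b * uu c b else 0)
              - (if N + 1 = N + 1 then w a b * vv b else 0) = - (w a b * vv b) := by
          intro b hb
          rw [if_neg (by omega), if_pos rfl, zero_sub]
        rw [Finset.sum_congr rfl e3, Finset.sum_neg_distrib]
        have e4 : (co a).coeff (N + 1) = ∑ b ∈ F, w a b * vv b := by
          have := hwg a ha
          simpa [vv] using this
        rw [e4]
        ring
      · -- m > N + 1
        have h1 : (co a).coeff m = 0 :=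
          Polynomial.coeff_eq_zero_of_natDegree_lt (lt_of_le_of_lt (hdeg a ha) hl)
        have e3 : ∀ b ∈ F,
            (if m = N then w a b * uu c b else 0)
              - (if m = N + 1 then w a b * vv b else 0) = 0 := by
          intro b hb
          rw [if_neg (by omega), if_neg (by omega), sub_zero]
        rw [Finset.sum_congr rfl e3, h1, Finset.sum_const, smul_zero, add_zero]
    exact ih F co' p hdeg' hsum'

end Main

section Final
open Main Polynomial

variable {A : Type*} [CommRing A] (c : ℕ → ℕ → A)

noncomputable def Phi : MvPolynomial (Unit ⊕ ℕ × ℕ) A →ₐ[A] Polynomial (BB A) :=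
  aeval (Sum.elim (fun _ => (Polynomial.X : Polynomial (BB A)))
    (fun a => Polynomial.C (X a)))

noncomputable def Psi : Polynomial (BB A) →+* MvPolynomial (Unit ⊕ ℕ × ℕ) A :=
  Polynomial.eval₂RingHom
    (rename (Sum.inr : ℕ × ℕ → Unit ⊕ ℕ × ℕ)).toRingHom (X (Sum.inl ()))

lemma Psi_comp_Phi : (Psi (A := A)).comp (Phi (A := A)).toRingHom = RingHom.id _ := by
  apply MvPolynomial.ringHom_ext
  · intro a
    simp [Phi, Psi, Polynomial.algebraMap_apply]
  · rintro (⟨⟩ | a) <;> simp [Phi, Psi]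

lemma Phi_rename (p : BB A) :
    Phi (rename (Sum.inr : ℕ × ℕ → Unit ⊕ ℕ × ℕ) p) = Polynomial.C p := by
  have : (Phi (A := A)).toRingHom.comp
      (rename (Sum.inr : ℕ × ℕ → Unit ⊕ ℕ × ℕ)).toRingHom
        = (Polynomial.C : BB A →+* Polynomial (BB A)) := by
    apply MvPolynomial.ringHom_ext
    · intro a
      simp [Phi, Polynomial.algebraMap_apply]
    · intro a
      simp [Phi]
  exact congrFun (congrArg (fun f => f.toFun) this) p

lemma Phi_gen (i j : ℕ) :
    Phi (X (Sum.inr (i, j)) - MvPolynomial.C (c i j)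
        - X (Sum.inl ()) * X (Sum.inr (i, j + 1))) = rho c (i, j) := by
  simp [Phi, rho, uu, vv, Polynomial.algebraMap_apply, map_sub, map_mul]

lemma map_qRel : Ideal.map (Phi (A := A)).toRingHom (qRel A c)
    = Ideal.span (Set.range (rho c)) := by
  rw [qRel, Ideal.map_span]
  congr 1
  ext q
  constructor
  · rintro ⟨r, ⟨i, j, rfl⟩, rfl⟩
    exact ⟨(i, j), (Phi_gen c i j).symm ▸ rfl⟩
  · rintro ⟨⟨i, j⟩, rfl⟩
    exact ⟨_, ⟨i, j, rfl⟩, Phi_gen c i j⟩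

lemma key_iff (p : BB A) :
    rename (Sum.inr : ℕ × ℕ → Unit ⊕ ℕ × ℕ) p ∈ qRel A c
      ↔ Polynomial.C p ∈ Ideal.span (Set.range (rho c)) := by
  constructor
  · intro h
    rw [← map_qRel, ← Phi_rename p]
    exact Ideal.mem_map_of_mem _ h
  · intro h
    rw [← map_qRel] at h
    have h2 := Ideal.mem_map_of_mem (Psi (A := A)) h
    rw [Ideal.map_map, Psi_comp_Phi, Ideal.map_id] at h2
    have h3 : Psi (Polynomial.C p) = rename (Sum.inr : ℕ × ℕ → Unit ⊕ ℕ × ℕ) p := by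
      simp [Psi]
    rwa [h3] at h2

end Final

section Final2
open Main

theorem kernel_of_subalgebra_presentation (A : Type*) [CommRing A] (c : ℕ → ℕ → A) :
    RingHom.ker ((Ideal.Quotient.mk (qRel A c)).comp
        (MvPolynomial.rename (Sum.inr : ℕ × ℕ → Unit ⊕ ℕ × ℕ)).toRingHom) =
      Ideal.span { q : MvPolynomial (ℕ × ℕ) A | ∃ i j k l : ℕ,
        q = (X (i, j) - C (c i j)) * X (k, l + 1)
            - X (i, j + 1) * (X (k, l) - C (c k l)) } := by
  classical
  rcases subsingleton_or_nontrivial A with hs | hn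
  · ext x
    have hx : x = 0 := Subsingleton.elim x 0
    subst hx
    simp only [zero_mem, iff_true, true_iff]
  · refine le_antisymm ?_ ?_
    · -- hard direction
      intro p hp
      have h1 : rename (Sum.inr : ℕ × ℕ → Unit ⊕ ℕ × ℕ) p ∈ qRel A c := by
        rw [← Ideal.Quotient.eq_zero_iff_mem]
        exact RingHom.mem_ker.mp hp
      have h2 := (key_iff c p).1 h1
      rw [Ideal.span, Finsupp.mem_span_range_iff_exists_finsupp] at h2
      obtain ⟨co, hco⟩ := h2
      have h3 : p ∈ Jid c := by
        apply main_induction c (co.support.sup fun a => (co a).natDegree)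
          co.support co p
        · intro a ha
          exact Finset.le_sup (f := fun a => (co a).natDegree) ha
        · rw [← hco]
          simp [Finsupp.sum]
      exact h3
    · -- easy direction
      rw [Ideal.span_le]
      rintro q ⟨i, j, k, l, rfl⟩
      have hmem : rename (Sum.inr : ℕ × ℕ → Unit ⊕ ℕ × ℕ)
          ((X (i, j) - C (c i j)) * X (k, l + 1)
            - X (i, j + 1) * (X (k, l) - C (c k l))) ∈ qRel A c := by
        have e : rename (Sum.inr : ℕ × ℕ → Unit ⊕ ℕ × ℕ)
            ((X (i, j) - C (c i j)) * X (k, l + 1)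
              - X (i, j + 1) * (X (k, l) - C (c k l)))
            = X (Sum.inr (k, l + 1)) *
                (X (Sum.inr (i, j)) - C (c i j)
                  - X (Sum.inl ()) * X (Sum.inr (i, j + 1)))
              - X (Sum.inr (i, j + 1)) *
                (X (Sum.inr (k, l)) - C (c k l)
                  - X (Sum.inl ()) * X (Sum.inr (k, l + 1))) := by
          simp only [map_sub, map_mul, rename_X, rename_C]
          ring
        rw [e]
        exact sub_mem
          (Ideal.mul_mem_left _ _ (Ideal.subset_span ⟨i, j, rfl⟩))
          (Ideal.mul_mem_left _ _ (Ideal.subset_span ⟨k, l, rfl⟩))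
      simpa only [SetLike.mem_coe, RingHom.mem_ker, RingHom.comp_apply,
        AlgHom.toRingHom_eq_coe, RingHom.coe_coe, Ideal.Quotient.eq_zero_iff_mem]
        using hmem

end Final2
end
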